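/- For every x ∈ [0, 1]: H(x) + H(1/2 + sqrt(x(1−x))) ≥ 1, where H(t) = −t·log₂ t − (1−t)·log₂(1−t) is the binary entropy (with the convention 0·log 0 = 0). -/

import Mathlib

/-- The binary entropy (base 2), with the convention `0 · log 0 = 0`. -/
noncomputable def H (x : ℝ) : ℝ :=
  -(x * Real.logb 2 x) - (1 - x) * Real.logb 2 (1 - x)

open Real

noncomputable def c1 : ℕ → ℝ := fun m => 1 / ((m + 1) * (2 * m + 1))

lemma c1_nonneg (m : ℕ) : 0 ≤ c1 m := by
  unfold c1; positivity

lemma c1_summable : Summable c1 := by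
  have h : Summable (fun n : ℕ => 1 / ((n : ℝ) + 1) ^ 2) := by
    have := (summable_nat_add_iff 1).2 (Real.summable_one_div_nat_pow.2 (le_refl 2))
    simpa using this
  refine h.of_nonneg_of_le c1_nonneg fun m => ?_
  unfold c1
  rw [div_le_div_iff₀ (by positivity) (by positivity)]
  have : ((m : ℝ) + 1) ^ 2 ≤ (m + 1) * (2 * m + 1) := by nlinarith [Nat.cast_nonneg (α := ℝ) m]
  linarith

/-- series for `(1+t)log(1+t) + (1-t)log(1-t)` -/
lemma hasSum_g {t : ℝ} (ht0 : 0 ≤ t) (ht1 : t < 1) :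
    HasSum (fun m : ℕ => t ^ (2 * m + 2) / ((m + 1) * (2 * m + 1)))
      ((1 + t) * Real.log (1 + t) + (1 - t) * Real.log (1 - t)) := by
  have habs : |t| < 1 := by rw [abs_of_nonneg ht0]; exact ht1
  have habs2 : |t ^ 2| < 1 := by
    rw [abs_of_nonneg (sq_nonneg t)]; nlinarith
  have A := (Real.hasSum_log_sub_log_of_abs_lt_one habs).mul_left t
  have B := Real.hasSum_pow_div_log_of_abs_lt_one habs2
  have C := A.sub B
  have hfun : (fun k : ℕ => t * (2 * (1 / (2 * (k:ℝ) + 1)) * t ^ (2 * k + 1))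
      - (t ^ 2) ^ (k + 1) / ((k:ℝ) + 1))
      = fun m : ℕ => t ^ (2 * m + 2) / (((m:ℝ) + 1) * (2 * m + 1)) := by
    funext k
    have h1 : (t ^ 2) ^ (k + 1) = t ^ (2 * k + 2) := by rw [← pow_mul]; ring_nf
    rw [h1]
    have h2 : t * (2 * (1 / (2 * (k:ℝ) + 1)) * t ^ (2 * k + 1)) = 2 * t ^ (2*k+2) / (2 * (k:ℝ) + 1) := by
      rw [pow_succ]; ring
    rw [h2]
    have hk1 : (0:ℝ) < (k:ℝ) + 1 := by positivity
    have hk2 : (0:ℝ) < 2 * (k:ℝ) + 1 := by positivity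
    field_simp
    ring
  rw [hfun] at C
  have hsum : t * (Real.log (1 + t) - Real.log (1 - t)) - -Real.log (1 - t ^ 2)
      = (1 + t) * Real.log (1 + t) + (1 - t) * Real.log (1 - t) := by
    have h1 : (1:ℝ) - t ^ 2 = (1 + t) * (1 - t) := by ring
    rw [h1, Real.log_mul (by linarith) (by linarith)]
    ring
  rw [hsum] at C
  exact C



lemma g_le_2log2 {t : ℝ} (ht0 : 0 ≤ t) (ht1 : t < 1) :
    (1 + t) * Real.log (1 + t) + (1 - t) * Real.log (1 - t) ≤ 2 * Real.log 2 := by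
  have h1 : (1 + t) * Real.log (1 + t) ≤ 2 * Real.log 2 := by
    have ha : Real.log (1 + t) ≤ Real.log 2 := Real.log_le_log (by linarith) (by linarith)
    have hb : (0:ℝ) ≤ Real.log (1 + t) := Real.log_nonneg (by linarith)
    nlinarith [Real.log_pos (by norm_num : (1:ℝ) < 2)]
  have h2 : (1 - t) * Real.log (1 - t) ≤ 0 :=
    mul_nonpos_of_nonneg_of_nonpos (by linarith) (Real.log_nonpos (by linarith) (by linarith))
  linarith

lemma psum_le (N : ℕ) : ∑ m ∈ Finset.range N, c1 m ≤ 2 * Real.log 2 := by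
  set F : ℝ → ℝ := fun u => ∑ m ∈ Finset.range N, u ^ (2 * m + 2) / ((m + 1) * (2 * m + 1)) with hF
  have hcont : Continuous F := by
    apply continuous_finset_sum
    intro m _
    exact (continuous_pow _).div_const _
  have hbound : ∀ u : ℝ, 0 ≤ u → u < 1 → F u ≤ 2 * Real.log 2 := by
    intro u hu0 hu1
    have hs := hasSum_g hu0 hu1
    have : F u ≤ (1 + u) * Real.log (1 + u) + (1 - u) * Real.log (1 - u) :=
      sum_le_hasSum (Finset.range N) (fun m _ => by positivity) hs
    exact this.trans (g_le_2log2 hu0 hu1)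
  have hseq : Filter.Tendsto (fun j : ℕ => (1 : ℝ) - 1 / (j + 1)) Filter.atTop (nhds 1) := by
    have : Filter.Tendsto (fun n : ℕ => 1 / ((n : ℝ) + 1)) Filter.atTop (nhds 0) := tendsto_one_div_add_atTop_nhds_zero_nat
    simpa using Filter.Tendsto.const_sub 1 this
  have htend : Filter.Tendsto (fun j : ℕ => F (1 - 1 / (j + 1))) Filter.atTop (nhds (F 1)) :=
    (hcont.tendsto 1).comp hseq
  have hle : F 1 ≤ 2 * Real.log 2 := by
    refine le_of_tendsto htend (Filter.Eventually.of_forall fun j => ?_)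
    have hj : (0:ℝ) < 1 / ((j:ℝ) + 1) := by positivity
    have hj1 : 1 / ((j:ℝ) + 1) ≤ 1 := by
      rw [div_le_one (by positivity)]; linarith [Nat.cast_nonneg (α := ℝ) j]
    exact hbound _ (by linarith) (by linarith)
  have hF1 : F 1 = ∑ m ∈ Finset.range N, c1 m := by
    simp [hF, c1]
  linarith [hF1 ▸ hle]

lemma tsum_c1_le : ∑' m, c1 m ≤ 2 * Real.log 2 :=
  tsum_le_of_sum_range_le c1_nonneg psum_le



lemma g_le {t : ℝ} (ht0 : 0 ≤ t) (ht1 : t < 1) :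
    (1 + t) * Real.log (1 + t) + (1 - t) * Real.log (1 - t) ≤ 2 * Real.log 2 * t ^ 2 := by
  have hs := hasSum_g ht0 ht1
  have h1 : (1 + t) * Real.log (1 + t) + (1 - t) * Real.log (1 - t)
      = ∑' m : ℕ, t ^ (2 * m + 2) / ((m + 1) * (2 * m + 1)) := hs.tsum_eq.symm
  rw [h1]
  have h2 : ∑' m : ℕ, t ^ (2 * m + 2) / ((m + 1) * (2 * m + 1)) ≤ ∑' m : ℕ, t ^ 2 * c1 m := by
    refine Summable.tsum_le_tsum (fun m => ?_) hs.summable (c1_summable.mul_left _)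
    unfold c1
    rw [mul_one_div, div_le_div_iff₀ (by positivity) (by positivity)]
    have ht2 : t ^ (2 * m + 2) ≤ t ^ 2 := by
      calc t ^ (2 * m + 2) = t ^ 2 * t ^ (2 * m) := by ring
        _ ≤ t ^ 2 * 1 := by
            apply mul_le_mul_of_nonneg_left _ (sq_nonneg t)
            exact pow_le_one₀ ht0 ht1.le
        _ = t ^ 2 := mul_one _
    nlinarith [pow_nonneg ht0 (2*m+2), sq_nonneg t,
      mul_pos (by positivity : (0:ℝ) < (m:ℝ)+1) (by positivity : (0:ℝ) < 2*(m:ℝ)+1)]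
  refine h2.trans ?_
  rw [tsum_mul_left]
  have := tsum_c1_le
  nlinarith [sq_nonneg t]

/-- key inequality for p ∈ [1/2, 1) -/
lemma key_half {p : ℝ} (hp0 : 1/2 ≤ p) (hp1 : p < 1) :
    4 * (p * (1 - p)) * Real.log 2 ≤ -(p * Real.log p) - (1 - p) * Real.log (1 - p) := by
  have ht := g_le (t := 2*p - 1) (by linarith) (by linarith)
  have e1 : (1 : ℝ) + (2*p - 1) = 2 * p := by ring
  have e2 : (1 : ℝ) - (2*p - 1) = 2 * (1 - p) := by ring
  rw [e1, e2] at ht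
  rw [Real.log_mul (by norm_num) (by linarith), Real.log_mul (by norm_num) (by linarith)] at ht
  nlinarith [ht]

lemma key {p : ℝ} (hp0 : 0 ≤ p) (hp1 : p ≤ 1) :
    4 * (p * (1 - p)) * Real.log 2 ≤ -(p * Real.log p) - (1 - p) * Real.log (1 - p) := by
  rcases eq_or_lt_of_le hp1 with rfl | hp1'
  · simp
  rcases eq_or_lt_of_le hp0 with rfl | hp0'
  · simp
  rcases le_or_gt (1/2) p with h | h
  · exact key_half h hp1'
  · have := key_half (p := 1 - p) (by linarith) (by linarith)
    have e : (1:ℝ) - (1 - p) = p := by ring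
    rw [e] at this
    nlinarith [this]


theorem binary_entropy_inequality (x : ℝ) (hx : x ∈ Set.Icc (0 : ℝ) 1) :
    1 ≤ H x + H (1 / 2 + Real.sqrt (x * (1 - x))) := by
  obtain ⟨hx0, hx1⟩ := hx
  set s := Real.sqrt (x * (1 - x)) with hs_def
  have hxx : 0 ≤ x * (1 - x) := mul_nonneg hx0 (by linarith)
  have hs0 : 0 ≤ s := Real.sqrt_nonneg _
  have hs2 : s ^ 2 = x * (1 - x) := Real.sq_sqrt hxx
  have hs_half : s ≤ 1 / 2 := by
    nlinarith [hs2, sq_nonneg (x - 1/2), sq_nonneg (s - 1/2)]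
  set q := 1 / 2 + s with hq_def
  have hq0 : (0:ℝ) ≤ q := by simp [hq_def]; linarith
  have hq1 : q ≤ 1 := by simp [hq_def]; linarith
  have k1 := key hx0 hx1
  have k2 := key hq0 hq1
  have l2 : (0:ℝ) < Real.log 2 := Real.log_pos (by norm_num)
  have hqq : q * (1 - q) = 1 / 4 - x * (1 - x) := by
    rw [hq_def]; nlinarith [hs2]
  have hH : H x + H q = ((-(x * Real.log x) - (1 - x) * Real.log (1 - x))
      + (-(q * Real.log q) - (1 - q) * Real.log (1 - q))) / Real.log 2 := by
    simp only [H, Real.logb]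
    ring
  rw [hH, le_div_iff₀ l2]
  have hsum : (4 * (x * (1 - x)) + 4 * (q * (1 - q))) = 1 := by linear_combination 4 * hqq
  have e : 4 * (x * (1 - x)) * Real.log 2 + 4 * (q * (1 - q)) * Real.log 2 = Real.log 2 := by
    linear_combination Real.log 2 * hsum
  linarith [k1, k2, e]
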